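/- Let H be a Hilbert space, let (u_n) be a sequence of unitary operators on H converging to 0 in the weak operator topology, and let x be a compact operator on H. Then u_n x u_n* converges to 0 in the weak operator topology. -/

import Mathlib

open Filter ContinuousLinearMap

/-- If `(u n)` is a sequence of unitary operators on a Hilbert space `H`
converging to `0` in the weak operator topology and `x` is a compact operator on `H`,
then `u n ∘ x ∘ (u n)*` converges to `0` in the weak operator topology. -/
theorem stmt12 {H : Type*} [NormedAddCommGroup H] [InnerProductSpace ℂ H] [CompleteSpace H]
    (u : ℕ → H →L[ℂ] H)
    (hu : ∀ n, (u n).comp (adjoint (u n)) = ContinuousLinearMap.id ℂ H ∧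
               (adjoint (u n)).comp (u n) = ContinuousLinearMap.id ℂ H)
    (huw : ∀ ζ ζ' : H, Tendsto (fun n => (inner ℂ ((u n) ζ) ζ' : ℂ)) atTop (nhds 0))
    (x : H →L[ℂ] H) (hx : IsCompactOperator x) :
    ∀ ζ ζ' : H,
      Tendsto (fun n => (inner ℂ (((u n).comp (x.comp (adjoint (u n)))) ζ) ζ' : ℂ))
        atTop (nhds 0) := by
  intro ζ ζ'
  set v : ℕ → H := fun n => adjoint (u n) ζ with hv
  -- u n preserves norms
  have hnu : ∀ n (w : H), ‖u n w‖ = ‖w‖ := by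
    intro n w
    have h := congrArg (fun T : H →L[ℂ] H => (inner ℂ (T w) w : ℂ)) (hu n).2
    simp only [comp_apply, ContinuousLinearMap.id_apply, adjoint_inner_left] at h
    rw [@norm_eq_sqrt_re_inner ℂ _ _ _ _ ((u n) w), @norm_eq_sqrt_re_inner ℂ _ _ _ _ w, h]
  -- adjoint (u n) preserves norms
  have hnv : ∀ n, ‖v n‖ = ‖ζ‖ := by
    intro n
    have h := congrArg (fun T : H →L[ℂ] H => (inner ℂ (T ζ) ζ : ℂ)) (hu n).1
    simp only [comp_apply, ContinuousLinearMap.id_apply] at h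
    have h2 : (inner ℂ (v n) (v n) : ℂ) = inner ℂ ζ ζ := by
      rw [hv]
      simp only
      rw [adjoint_inner_right]; exact h
    rw [@norm_eq_sqrt_re_inner ℂ _ _ _ _ (v n), @norm_eq_sqrt_re_inner ℂ _ _ _ _ ζ, h2]
  -- v n → 0 weakly
  have hvw : ∀ w : H, Tendsto (fun n => (inner ℂ (v n) w : ℂ)) atTop (nhds 0) := by
    intro w
    have h : ∀ n, (inner ℂ (v n) w : ℂ) = starRingEnd ℂ (inner ℂ (u n w) ζ) := by
      intro n
      rw [hv]; simp only
      rw [adjoint_inner_left, inner_conj_symm]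
    simp only [h]
    have := (huw w ζ).star
    simpa using this
  -- x (v n) → 0 weakly
  have hxvw : ∀ η : H, Tendsto (fun n => (inner ℂ (x (v n)) η : ℂ)) atTop (nhds 0) := by
    intro η
    have h : ∀ n, (inner ℂ (x (v n)) η : ℂ) = inner ℂ (v n) (adjoint x η) := by
      intro n; rw [adjoint_inner_right]
    simp only [h]
    exact hvw (adjoint x η)
  -- x (v n) → 0 in norm, by compactness
  have hB : Tendsto (fun n => ‖x (v n)‖) atTop (nhds 0) := by
    apply tendsto_of_subseq_tendsto
    intro ns hns
    have hbd : Bornology.IsBounded (Metric.closedBall (0 : H) ‖ζ‖) :=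
      Metric.isBounded_closedBall
    have hK : IsCompact (closure (x '' Metric.closedBall (0 : H) ‖ζ‖)) :=
      hx.isCompact_closure_image_of_bounded hbd
    have hmem : ∀ k, x (v (ns k)) ∈ closure (x '' Metric.closedBall (0 : H) ‖ζ‖) := by
      intro k
      apply subset_closure
      exact ⟨v (ns k), by simp [Metric.mem_closedBall, dist_zero_right, hnv], rfl⟩
    obtain ⟨a, -, ms, hms, hlim⟩ := hK.tendsto_subseq hmem
    have ha : a = 0 := by
      have h1 : Tendsto (fun k => (inner ℂ (x (v (ns (ms k)))) a : ℂ)) atTop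
          (nhds (inner ℂ a a)) := by
        exact (hlim.inner tendsto_const_nhds)
      have h2 : Tendsto (fun k => (inner ℂ (x (v (ns (ms k)))) a : ℂ)) atTop (nhds 0) :=
        (hxvw a).comp (hns.comp hms.tendsto_atTop)
      have : (inner ℂ a a : ℂ) = 0 := tendsto_nhds_unique h1 h2
      exact inner_self_eq_zero.mp this
    refine ⟨ms, ?_⟩
    have := hlim.norm
    rw [ha, norm_zero] at this
    exact this
  -- conclude
  have hbound : ∀ n, ‖(inner ℂ (((u n).comp (x.comp (adjoint (u n)))) ζ) ζ' : ℂ)‖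
      ≤ ‖x (v n)‖ * ‖ζ'‖ := by
    intro n
    simp only [comp_apply]
    calc ‖(inner ℂ ((u n) (x (v n))) ζ' : ℂ)‖ ≤ ‖(u n) (x (v n))‖ * ‖ζ'‖ :=
          norm_inner_le_norm _ _
      _ = ‖x (v n)‖ * ‖ζ'‖ := by rw [hnu]
  exact squeeze_zero_norm hbound (by simpa using hB.mul_const ‖ζ'‖)
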